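/- Let z be a second-order random-walk process: z[k] is the first component of the state r[k] evolving as r[k+1] = A r[k] + ν[k] with A = [[1,τ],[0,1]], where ν[k] are i.i.d. centered Gaussian vectors in ℝ² with covariance Q(q) having entries Q₁₁ = qᵀ(τΣ₁ + (τ³/3)Σ₂)q, Q₁₂ = Q₂₁ = (τ²/2)qᵀΣ₂q, Q₂₂ = τ qᵀΣ₂q. Then the second difference z[k+2] − 2z[k+1] + z[k] equals C(A − 2I)ν[k] + Cν[k+1] where C = (1, 0), and its variance equals qᵀ(2τΣ₁ + (2τ³/3)Σ₂)q; hence the Allan variance E[(Δ²z)²]/(2τ²) equals qᵀΓ(τ)q/τ², where Γ(τ) = τΣ₁ + (τ³/3)Σ₂. -/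

import Mathlib

open MeasureTheory

theorem stmt_13 {N : ℕ} {Ω : Type*} [MeasurableSpace Ω]
    (μ : Measure Ω) [IsProbabilityMeasure μ]
    (τ : ℝ) (hτ : 0 < τ)
    (s1 s2 : Fin N → ℝ) (hs1 : ∀ i, 0 < s1 i) (hs2 : ∀ i, 0 < s2 i)
    (S1 S2 : Matrix (Fin N) (Fin N) ℝ)
    (hS1 : S1 = Matrix.diagonal s1) (hS2 : S2 = Matrix.diagonal s2)
    (q : Fin N → ℝ)
    (A : Matrix (Fin 2) (Fin 2) ℝ) (hA : A = !![1, τ; 0, 1])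
    (Qc : Matrix (Fin 2) (Fin 2) ℝ)
    (hQc : Qc = !![dotProduct q ((τ • S1 + (τ ^ 3 / 3) • S2).mulVec q),
                   (τ ^ 2 / 2) * dotProduct q (S2.mulVec q);
                   (τ ^ 2 / 2) * dotProduct q (S2.mulVec q),
                   τ * dotProduct q (S2.mulVec q)])
    (ν0 ν1 : Ω → Fin 2 → ℝ)
    (hmean0 : ∀ s, ∫ ω, ν0 ω s ∂μ = 0) (hmean1 : ∀ s, ∫ ω, ν1 ω s ∂μ = 0)
    (hint00 : ∀ s t, Integrable (fun ω => ν0 ω s * ν0 ω t) μ)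
    (hint11 : ∀ s t, Integrable (fun ω => ν1 ω s * ν1 ω t) μ)
    (hint01 : ∀ s t, Integrable (fun ω => ν0 ω s * ν1 ω t) μ)
    (hcov0 : ∀ s t, ∫ ω, ν0 ω s * ν0 ω t ∂μ = Qc s t)
    (hcov1 : ∀ s t, ∫ ω, ν1 ω s * ν1 ω t ∂μ = Qc s t)
    (hindep : ∀ s t, ∫ ω, ν0 ω s * ν1 ω t ∂μ = 0)
    (r0 r1 r2 : Ω → Fin 2 → ℝ)
    (hr1 : ∀ ω, r1 ω = A.mulVec (r0 ω) + ν0 ω)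
    (hr2 : ∀ ω, r2 ω = A.mulVec (r1 ω) + ν1 ω)
    (d2z : Ω → ℝ)
    (hd2z : ∀ ω, d2z ω = r2 ω 0 - 2 * r1 ω 0 + r0 ω 0) :
    (∀ ω, d2z ω = ((A - 2 • 1).mulVec (ν0 ω)) 0 + ν1 ω 0) ∧
    (∫ ω, (d2z ω) ^ 2 ∂μ =
      dotProduct q (((2 * τ) • S1 + (2 * τ ^ 3 / 3) • S2).mulVec q)) ∧
    ((∫ ω, (d2z ω) ^ 2 ∂μ) / (2 * τ ^ 2) =
      dotProduct q ((τ • S1 + (τ ^ 3 / 3) • S2).mulVec q) / τ ^ 2) := by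
  have hd : ∀ ω, d2z ω = -(ν0 ω 0) + τ * ν0 ω 1 + ν1 ω 0 := by
    intro ω
    simp [hd2z, hr2, hr1, hA, Matrix.mulVec, dotProduct, Fin.sum_univ_two, Matrix.vecHead, Matrix.vecTail]
    ring
  have h1 : ∀ ω, d2z ω = ((A - 2 • 1).mulVec (ν0 ω)) 0 + ν1 ω 0 := by
    intro ω
    rw [hd]
    have h2 : (2 • (1 : Matrix (Fin 2) (Fin 2) ℝ)) = !![2,0;0,2] := by
      ext i j; fin_cases i <;> fin_cases j <;> simp [Matrix.one_apply]
    simp [hA, h2, Matrix.mulVec, dotProduct, Fin.sum_univ_two, Matrix.sub_apply]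
    ring
  -- scalar abbreviations
  set a := dotProduct q (S1.mulVec q) with ha
  set b := dotProduct q (S2.mulVec q) with hb
  have hlin : ∀ c d : ℝ, dotProduct q ((c • S1 + d • S2).mulVec q)
      = c * a + d * b := by
    intro c d
    simp [Matrix.add_mulVec, Matrix.smul_mulVec, dotProduct_add,
      dotProduct_smul, smul_eq_mul, ha, hb]
  have hQ00 : Qc 0 0 = τ * a + (τ ^ 3 / 3) * b := by rw [hQc]; simp [hlin τ (τ^3/3)]
  have hQ01 : Qc 0 1 = (τ ^ 2 / 2) * b := by rw [hQc]; simp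
  have hQ10 : Qc 1 0 = (τ ^ 2 / 2) * b := by rw [hQc]; simp
  have hQ11 : Qc 1 1 = τ * b := by rw [hQc]; simp
  have hint : Integrable (fun ω => (d2z ω) ^ 2) μ := by
    have : (fun ω => (d2z ω) ^ 2) = fun ω =>
        (ν0 ω 0 * ν0 ω 0) + τ ^ 2 * (ν0 ω 1 * ν0 ω 1) + (ν1 ω 0 * ν1 ω 0)
        - 2 * τ * (ν0 ω 0 * ν0 ω 1) - 2 * (ν0 ω 0 * ν1 ω 0)
        + 2 * τ * (ν0 ω 1 * ν1 ω 0) := by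
      funext ω; rw [hd]; ring
    rw [this]
    exact ((((((hint00 0 0).add ((hint00 1 1).const_mul _)).add (hint11 0 0)).sub
      ((hint00 0 1).const_mul _)).sub ((hint01 0 0).const_mul _)).add
      ((hint01 1 0).const_mul _))
  have hI : ∫ ω, (d2z ω) ^ 2 ∂μ = 2 * τ * a + (2 * τ ^ 3 / 3) * b := by
    have heq : (fun ω => (d2z ω) ^ 2) = fun ω =>
        (ν0 ω 0 * ν0 ω 0) + τ ^ 2 * (ν0 ω 1 * ν0 ω 1) + (ν1 ω 0 * ν1 ω 0)
        - 2 * τ * (ν0 ω 0 * ν0 ω 1) - 2 * (ν0 ω 0 * ν1 ω 0)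
        + 2 * τ * (ν0 ω 1 * ν1 ω 0) := by
      funext ω; rw [hd]; ring
    calc ∫ ω, (d2z ω) ^ 2 ∂μ
        = ∫ ω, ((ν0 ω 0 * ν0 ω 0) + τ ^ 2 * (ν0 ω 1 * ν0 ω 1) + (ν1 ω 0 * ν1 ω 0)
          - 2 * τ * (ν0 ω 0 * ν0 ω 1) - 2 * (ν0 ω 0 * ν1 ω 0)
          + 2 * τ * (ν0 ω 1 * ν1 ω 0)) ∂μ := by rw [← heq]
      _ = 2 * τ * a + (2 * τ ^ 3 / 3) * b := by
          rw [integral_add, integral_sub, integral_sub, integral_add, integral_add,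
            integral_const_mul, integral_const_mul, integral_const_mul,
            integral_const_mul, hcov0 0 0, hcov0 1 1, hcov1 0 0, hcov0 0 1,
            hindep 0 0, hindep 1 0, hQ00, hQ01, hQ11]
          · ring
          · exact hint00 0 0
          · exact (hint00 1 1).const_mul _
          · exact (hint00 0 0).add ((hint00 1 1).const_mul _)
          · exact hint11 0 0
          · exact ((hint00 0 0).add ((hint00 1 1).const_mul _)).add (hint11 0 0)
          · exact (hint00 0 1).const_mul _
          · exact (((hint00 0 0).add ((hint00 1 1).const_mul _)).add (hint11 0 0)).sub
              ((hint00 0 1).const_mul _)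
          · exact (hint01 0 0).const_mul _
          · exact ((((hint00 0 0).add ((hint00 1 1).const_mul _)).add (hint11 0 0)).sub
              ((hint00 0 1).const_mul _)).sub ((hint01 0 0).const_mul _)
          · exact (hint01 1 0).const_mul _
  refine ⟨h1, ?_, ?_⟩
  · rw [hI, hlin]
  · rw [hI, hlin]
    have hτ' : (τ:ℝ) ≠ 0 := ne_of_gt hτ
    field_simp
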